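/- Let f be a satisfaction function with f(0) = 0 and nonnegative weights w_k ≥ 0, let A ∈ C, and let the profile v′ be obtained from v by adding new ballots containing only A and/or changing some ballots σ with A ∉ σ into σ ∪ {A}, with no other changes (so every candidate other than A receives exactly the same votes as before). If some possible outcome of Thiele's optimization method with satisfaction f on v for M seats contains A, then some possible outcome on v′ for M seats contains A. -/

import Mathlib

open Finset

/-- Total satisfaction `F(S) = Σ_σ v_σ · f(|σ ∩ S|)`. -/
noncomputable def thieleF {C : Type} [Fintype C] [DecidableEq C]
    (f : ℕ → ℝ) (v : Finset C → ℕ) (S : Finset C) : ℝ :=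
  ∑ σ : Finset C, (v σ : ℝ) * f ((σ ∩ S).card)

/-- `S` is a possible outcome of Thiele's optimization method with satisfaction
function `f` for `M` seats. -/
def ThieleOptOutcome {C : Type} [Fintype C] [DecidableEq C]
    (f : ℕ → ℝ) (v : Finset C → ℕ) (M : ℕ) (S : Finset C) : Prop :=
  S.card = M ∧ ∀ T : Finset C, T.card = M → thieleF f v T ≤ thieleF f v S

/-- Monotonicity of Thiele's optimization method: let `f` be a satisfaction function
with `f 0 = 0` and nonnegative weights (`Monotone f`), and let the profile `v'` be
obtained from `v` by adding `a` new ballots containing only `A` and, for each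
ballot type `σ` with `A ∉ σ`, changing `d σ ≤ v σ` ballots of type `σ` into
`σ ∪ {A}` (no other changes).  If some possible outcome on `v` for `M` seats
contains `A`, then some possible outcome on `v'` for `M` seats contains `A`. -/
lemma thiele_diff {C : Type} [Fintype C] [DecidableEq C]
    (f : ℕ → ℝ) (v v' : Finset C → ℕ) (A : C) (d : Finset C → ℕ) (a : ℕ)
    (hd : ∀ σ : Finset C, A ∉ σ → d σ ≤ v σ)
    (hfree : ∀ σ : Finset C, A ∉ σ → v' σ = v σ - d σ)
    (hwith : ∀ σ : Finset C, A ∈ σ →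
      v' σ = v σ + d (σ.erase A) + (if σ = {A} then a else 0))
    (T : Finset C) :
    thieleF f v' T = thieleF f v T +
      ∑ τ ∈ Finset.univ.filter (fun τ : Finset C => A ∉ τ),
        ((d τ : ℝ) * (f ((insert A τ ∩ T).card) - f ((τ ∩ T).card)) +
          (if insert A τ = {A} then (a : ℝ) else 0) * f ((insert A τ ∩ T).card)) := by
  classical
  have key : ∀ (w : Finset C → ℕ) ,
      (∑ σ : Finset C, (w σ : ℝ) * f ((σ ∩ T).card)) =
      (∑ σ ∈ Finset.univ.filter (fun σ : Finset C => A ∈ σ), (w σ : ℝ) * f ((σ ∩ T).card))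
      + (∑ σ ∈ Finset.univ.filter (fun σ : Finset C => A ∉ σ), (w σ : ℝ) * f ((σ ∩ T).card)) := by
    intro w
    exact (Finset.sum_filter_add_sum_filter_not _ _ _).symm
  have reindex : ∀ (g : Finset C → ℝ),
      (∑ σ ∈ Finset.univ.filter (fun σ : Finset C => A ∈ σ), g σ)
      = ∑ τ ∈ Finset.univ.filter (fun τ : Finset C => A ∉ τ), g (insert A τ) := by
    intro g
    apply Finset.sum_nbij' (fun σ => σ.erase A) (fun τ => insert A τ)
    · intro σ hσ
      simp only [mem_filter, mem_univ, true_and] at hσ ⊢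
      simp
    · intro τ hτ
      simp only [mem_filter, mem_univ, true_and] at hτ ⊢
      simp [hτ]
    · intro σ hσ
      simp only [mem_filter, mem_univ, true_and] at hσ
      exact Finset.insert_erase hσ
    · intro τ hτ
      simp only [mem_filter, mem_univ, true_and] at hτ
      exact Finset.erase_insert hτ
    · intro σ hσ
      simp only [mem_filter, mem_univ, true_and] at hσ
      rw [Finset.insert_erase hσ]
  unfold thieleF
  rw [key v', key v, reindex (fun σ => (v' σ : ℝ) * f ((σ ∩ T).card)),
    reindex (fun σ => (v σ : ℝ) * f ((σ ∩ T).card))]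
  rw [← Finset.sum_add_distrib, ← Finset.sum_add_distrib, ← Finset.sum_add_distrib]
  apply Finset.sum_congr rfl
  intro τ hτ
  simp only [mem_filter, mem_univ, true_and] at hτ
  have h1 : v' (insert A τ) = v (insert A τ) + d τ + (if insert A τ = {A} then a else 0) := by
    rw [hwith _ (Finset.mem_insert_self A τ), Finset.erase_insert hτ]
  have h2 : (v' τ : ℝ) = (v τ : ℝ) - (d τ : ℝ) := by
    rw [hfree τ hτ, Nat.cast_sub (hd τ hτ)]
  rw [h1, h2]
  push_cast
  ring

theorem stmt_6 {C : Type} [Fintype C] [DecidableEq C]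
    (f : ℕ → ℝ) (hf0 : f 0 = 0) (hmono : Monotone f)
    (v v' : Finset C → ℕ) (A : C) (d : Finset C → ℕ) (a : ℕ)
    (hd : ∀ σ : Finset C, A ∉ σ → d σ ≤ v σ)
    (hfree : ∀ σ : Finset C, A ∉ σ → v' σ = v σ - d σ)
    (hwith : ∀ σ : Finset C, A ∈ σ →
      v' σ = v σ + d (σ.erase A) + (if σ = {A} then a else 0))
    (M : ℕ) (hM1 : 1 ≤ M) (hM2 : M ≤ Fintype.card C)
    (h : ∃ S : Finset C, ThieleOptOutcome f v M S ∧ A ∈ S) :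
    ∃ S' : Finset C, ThieleOptOutcome f v' M S' ∧ A ∈ S' := by
  classical
  obtain ⟨S, ⟨hScard, hSmax⟩, hAS⟩ := h
  -- If A ∉ T, satisfaction is unchanged
  have heq : ∀ T : Finset C, A ∉ T → thieleF f v' T = thieleF f v T := by
    intro T hAT
    rw [thiele_diff f v v' A d a hd hfree hwith T]
    have : ∀ τ ∈ Finset.univ.filter (fun τ : Finset C => A ∉ τ),
        ((d τ : ℝ) * (f ((insert A τ ∩ T).card) - f ((τ ∩ T).card)) +
          (if insert A τ = {A} then (a : ℝ) else 0) * f ((insert A τ ∩ T).card)) = 0 := by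
      intro τ hτ
      simp only [mem_filter, mem_univ, true_and] at hτ
      rw [Finset.insert_inter_of_notMem hAT]
      by_cases hτ0 : insert A τ = {A}
      · have : τ = ∅ := by
          ext x
          simp only [Finset.notMem_empty, iff_false]
          intro hx
          have : x ∈ insert A τ := Finset.mem_insert_of_mem hx
          rw [hτ0] at this
          simp only [Finset.mem_singleton] at this
          exact hτ (this ▸ hx)
        subst this
        simp [hf0]
      · simp [hτ0]
    rw [Finset.sum_congr rfl this]
    simp
  -- If A ∈ T, satisfaction doesn't decrease
  have hle : ∀ T : Finset C, A ∈ T → thieleF f v T ≤ thieleF f v' T := by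
    intro T hAT
    rw [thiele_diff f v v' A d a hd hfree hwith T]
    have : (0:ℝ) ≤ ∑ τ ∈ Finset.univ.filter (fun τ : Finset C => A ∉ τ),
        ((d τ : ℝ) * (f ((insert A τ ∩ T).card) - f ((τ ∩ T).card)) +
          (if insert A τ = {A} then (a : ℝ) else 0) * f ((insert A τ ∩ T).card)) := by
      apply Finset.sum_nonneg
      intro τ hτ
      have hmonoT : f ((τ ∩ T).card) ≤ f ((insert A τ ∩ T).card) := by
        apply hmono
        apply Finset.card_le_card
        exact Finset.inter_subset_inter (Finset.subset_insert A τ) (le_refl T)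
      have hf0' : (0:ℝ) ≤ f ((insert A τ ∩ T).card) := by
        rw [← hf0]; exact hmono (Nat.zero_le _)
      have h1 : (0:ℝ) ≤ (d τ : ℝ) * (f ((insert A τ ∩ T).card) - f ((τ ∩ T).card)) :=
        mul_nonneg (Nat.cast_nonneg _) (by linarith)
      have h2 : (0:ℝ) ≤ (if insert A τ = {A} then (a : ℝ) else 0) * f ((insert A τ ∩ T).card) := by
        apply mul_nonneg _ hf0'
        split <;> simp
      linarith
    linarith
  -- get a maximizer for v'
  obtain ⟨W, hWsub, hWcard⟩ := Finset.exists_subset_card_eq (s := (Finset.univ : Finset C)) (n := M) (by simpa using hM2)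
  have hne : (Finset.univ.powersetCard M : Finset (Finset C)).Nonempty :=
    ⟨W, by simp [Finset.mem_powersetCard, hWcard]⟩
  obtain ⟨S', hS'mem, hS'max⟩ := Finset.exists_max_image _ (thieleF f v') hne
  have hS'card : S'.card = M := (Finset.mem_powersetCard.mp hS'mem).2
  have hS'maxall : ∀ T : Finset C, T.card = M → thieleF f v' T ≤ thieleF f v' S' := by
    intro T hT
    exact hS'max T (by simp [Finset.mem_powersetCard, hT])
  by_cases hA : A ∈ S'
  · exact ⟨S', ⟨hS'card, hS'maxall⟩, hA⟩
  · refine ⟨S, ⟨hScard, ?_⟩, hAS⟩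
    intro T hT
    calc thieleF f v' T ≤ thieleF f v' S' := hS'maxall T hT
      _ = thieleF f v S' := heq S' hA
      _ ≤ thieleF f v S := hSmax S' hS'card
      _ ≤ thieleF f v' S := hle S hAS
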